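/- Let K = [[k_nn,k_nt],[k_nt,k_tt]] be symmetric positive definite with k_nt > 0 and let f ≥ k_tt/k_nt, R > 0. Define F : [0,2] → ℝ² by F(s) = (sR/f, sR) for s ∈ [0,1] and F(s) = (R/f + (s−1), R + (f+1)(s−1)) for s ∈ [1,2]. Define u(s) = 0 for s ∈ [0,1) and, for s ∈ [1,2], u(s) = ( (R(k_tt/f − k_nt) + [k_tt − k_nt(f+1)](s−1)) / D , (R(k_nn − k_nt/f) + [k_nn(f+1) − k_nt](s−1)) / D ) with D = k_nn k_tt − k_nt², and t(s) = −F(s) for s ∈ [0,1), t(s) = 0 for s ∈ [1,2]. Then for every s ∈ [0,2]: K u(s) = F(s) + t(s), u_n(s) ≤ 0, t_n(s) ≤ 0, u_n(s)·t_n(s) = 0, and |t_t(s)| ≤ −f·t_n(s); moreover u jumps at s = 1 (u(1−) = 0 ≠ u(1)). -/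

import Mathlib

/-- an explicit jumping solution of the discrete quasi-static
problem under Lipschitz load, for `f ≥ k_tt/k_nt`. -/
theorem stmt4 (knn knt ktt f R : ℝ)
    (hknn : 0 < knn) (hknt : 0 < knt) (hktt : 0 < ktt)
    (hdet : 0 < knn * ktt - knt ^ 2)
    (hf : ktt / knt ≤ f) (hR : 0 < R)
    (D : ℝ) (hD : D = knn * ktt - knt ^ 2)
    (F u t : ℝ → ℝ × ℝ)
    (hF : ∀ s : ℝ, F s = if s < 1 then (s * R / f, s * R)
        else (R / f + (s - 1), R + (f + 1) * (s - 1)))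
    (hu : ∀ s : ℝ, u s = if s < 1 then (0, 0)
        else ((R * (ktt / f - knt) + (ktt - knt * (f + 1)) * (s - 1)) / D,
              (R * (knn - knt / f) + (knn * (f + 1) - knt) * (s - 1)) / D))
    (ht : ∀ s : ℝ, t s = if s < 1 then (-(s * R / f), -(s * R)) else (0, 0)) :
    (∀ s : ℝ, 0 ≤ s → s ≤ 2 →
      (knn * (u s).1 + knt * (u s).2 = (F s).1 + (t s).1 ∧
       knt * (u s).1 + ktt * (u s).2 = (F s).2 + (t s).2) ∧
      (u s).1 ≤ 0 ∧ (t s).1 ≤ 0 ∧ (u s).1 * (t s).1 = 0 ∧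
      |(t s).2| ≤ -f * (t s).1) ∧
    u 1 ≠ (0, 0) := by
  have hf0 : 0 < f := lt_of_lt_of_le (div_pos hktt hknt) hf
  subst hD
  have hDpos : 0 < knn * ktt - knt ^ 2 := hdet
  have hfk : ktt ≤ f * knt := (div_le_iff₀ hknt).mp hf
  constructor
  · intro s hs0 hs2
    by_cases h : s < 1
    · simp only [hu s, ht s, hF s, if_pos h]
      have hsR : 0 ≤ s * R := mul_nonneg hs0 hR.le
      refine ⟨⟨by ring, by ring⟩, le_refl 0, ?_, by ring, ?_⟩
      · have : 0 ≤ s * R / f := div_nonneg hsR hf0.le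
        linarith
      · rw [abs_neg, abs_of_nonneg hsR]
        have heq : f * (s * R / f) = s * R := by
          field_simp
        linarith
    · push_neg at h
      simp only [hu s, ht s, hF s, if_neg (not_lt.mpr h)]
      have hA : R * (ktt / f - knt) + (ktt - knt * (f + 1)) * (s - 1) ≤ 0 := by
        have h1 : ktt / f - knt ≤ 0 := by
          rw [sub_nonpos, div_le_iff₀ hf0]
          linarith [hfk]
        have h2 : ktt - knt * (f + 1) ≤ 0 := by nlinarith
        nlinarith
      refine ⟨⟨?_, ?_⟩, ?_, le_refl 0, by ring, by simp⟩
      · field_simp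
        ring
      · rw [mul_div_assoc', mul_div_assoc', ← add_div, div_eq_iff hDpos.ne']
        field_simp
        ring
      · exact div_nonpos_of_nonpos_of_nonneg hA hDpos.le
  · rw [hu 1]
    simp only [lt_irrefl, if_false]
    intro hcontra
    have h2 := congrArg Prod.snd hcontra
    simp only at h2
    have hpos : 0 < (R * (knn - knt / f) + (knn * (f + 1) - knt) * (1 - 1)) / (knn * ktt - knt ^ 2) := by
      apply div_pos _ hDpos
      have : knt / f < knn := by
        rw [div_lt_iff₀ hf0]
        nlinarith
      nlinarith
    rw [h2] at hpos
    exact lt_irrefl 0 hpos
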